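/- arXiv:2501.17999 — 3 statements merged into one kernel-verified Lean document; each statement's English description precedes it below -/
import Mathlib

section
/- Let Q₈ denote the quaternion group of order 8. For every natural number m ≥ 1, there is no injective group homomorphism from Q₈ into the semidirect product M_m = (ℤ/mℤ × ℤ/mℤ) ⋊ ℤ/2ℤ, where the nontrivial element of ℤ/2ℤ acts on ℤ/mℤ × ℤ/mℤ by negation (inversion) in both factors. -/
noncomputable section

/-- The inversion (negation) automorphism of `ℤ/mℤ × ℤ/mℤ` (written multiplicatively). -/
def negAut (m : ℕ) : MulAut (Multiplicative (ZMod m × ZMod m)) :=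
  MulEquiv.inv (Multiplicative (ZMod m × ZMod m))

/-- The action of `ℤ/2ℤ` on `ℤ/mℤ × ℤ/mℤ` in which the nontrivial element acts by
negation (inversion) in both factors. -/
def invAction (m : ℕ) : Multiplicative (ZMod 2) →* MulAut (Multiplicative (ZMod m × ZMod m)) :=
  MonoidHom.mk' (fun a => if a.toAdd = 0 then 1 else negAut m) (by
    have hcases : ∀ x : ZMod 2, x = 0 ∨ x = 1 := by decide
    have h11 : (1 + 1 : ZMod 2) = 0 := by decide
    have h10 : (1 : ZMod 2) ≠ 0 := by decide
    have hsq : negAut m * negAut m = 1 := by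
      refine MulEquiv.ext fun x => ?_
      show ((negAut m) ((negAut m) x)) = x
      simp [negAut]
    intro a b
    rcases hcases a.toAdd with ha | ha <;> rcases hcases b.toAdd with hb | hb <;>
      simp [toAdd_mul, ha, hb, h11, h10, hsq])

/-- The maximal finite handlebody group `M_m = (ℤ/mℤ × ℤ/mℤ) ⋊ ℤ/2ℤ`, where the
nontrivial element of `ℤ/2ℤ` acts by negation in both factors. -/
abbrev MaxHandlebodyGroup (m : ℕ) : Type :=
  SemidirectProduct (Multiplicative (ZMod m × ZMod m)) (Multiplicative (ZMod 2)) (invAction m)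

/-- For every `m ≥ 1`, there is no injective group homomorphism from the quaternion group
`Q₈` of order `8` into the maximal finite handlebody group
`M_m = (ℤ/mℤ × ℤ/mℤ) ⋊ ℤ/2ℤ` (with `ℤ/2ℤ` acting by inversion in both factors). -/
theorem quaternionGroup_no_embedding_maxHandlebodyGroup (m : ℕ) (hm : 1 ≤ m)
    (f : QuaternionGroup 2 →* MaxHandlebodyGroup m) :
    ¬ Function.Injective f := by
  intro hf
  -- any element with nontrivial right component squares to 1
  have key : ∀ g : MaxHandlebodyGroup m, g.right.toAdd = (1 : ZMod 2) → g * g = 1 := by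
    intro g hg
    have h10 : (1 : ZMod 2) ≠ 0 := by decide
    ext : 1
    · show (g * g).left = 1
      rw [SemidirectProduct.mul_left]
      have : (invAction m) g.right = negAut m := by
        show (if g.right.toAdd = 0 then 1 else negAut m) = negAut m
        rw [hg]; simp [h10]
      rw [this]
      show g.left * (g.left)⁻¹ = 1
      simp
    · show (g * g).right = 1
      rw [SemidirectProduct.mul_right]
      have : g.right = Multiplicative.ofAdd (1 : ZMod 2) := by
        apply Multiplicative.toAdd.injective; simpa using hg
      rw [this]
      decide
  have triv : ∀ g : QuaternionGroup 2, g * g ≠ 1 → (f g).right.toAdd = (0 : ZMod 2) := by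
    intro g hg
    by_contra h
    have h1 : (f g).right.toAdd = (1 : ZMod 2) := by
      rcases (by decide : ∀ x : ZMod 2, x = 0 ∨ x = 1) (f g).right.toAdd with h' | h'
      · exact absurd h' h
      · exact h'
    have := key (f g) h1
    rw [← map_mul] at this
    exact hg (hf (by rw [this, map_one]))
  have hi : (f (QuaternionGroup.a 1)).right.toAdd = (0 : ZMod 2) :=
    triv _ (by decide)
  have hj : (f (QuaternionGroup.xa 0)).right.toAdd = (0 : ZMod 2) :=
    triv _ (by decide)
  -- elements with trivial right component commute
  have comm : ∀ g h : MaxHandlebodyGroup m, g.right.toAdd = (0 : ZMod 2) →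
      h.right.toAdd = (0 : ZMod 2) → g * h = h * g := by
    intro g h hg hh
    have hg1 : g.right = 1 := by
      apply Multiplicative.toAdd.injective; simpa using hg
    have hh1 : h.right = 1 := by
      apply Multiplicative.toAdd.injective; simpa using hh
    have act : ∀ k : MaxHandlebodyGroup m, k.right = 1 →
        ∀ z, (invAction m) k.right z = z := by
      intro k hk z
      rw [hk]
      simp
    ext : 1
    · show (g * h).left = (h * g).left
      rw [SemidirectProduct.mul_left, SemidirectProduct.mul_left, act g hg1, act h hh1,
        mul_comm]
    · show (g * h).right = (h * g).right
      rw [SemidirectProduct.mul_right, SemidirectProduct.mul_right, mul_comm]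
  have hcomm := comm _ _ hi hj
  rw [← map_mul, ← map_mul] at hcomm
  have := hf hcomm
  revert this
  decide


end
end

section
/- Let ρ : Q₈ → O(4) be an injective group homomorphism from the quaternion group of order 8 into the orthogonal group of ℝ⁴. Then the resulting linear action of Q₈ on ℝ⁴ is free away from the origin: for every g ∈ Q₈ with g ≠ 1 and every x ∈ ℝ⁴ with x ≠ 0, one has ρ(g)x ≠ x. In particular, the induced action of Q₈ on the unit sphere S³ ⊂ ℝ⁴ is free. -/
noncomputable section

open Module

private lemma aux_W_dim (W : Submodule ℝ (Fin 4 → ℝ))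
    (f g : (Fin 4 → ℝ) →ₗ[ℝ] (Fin 4 → ℝ))
    (hfW : ∀ w ∈ W, f w ∈ W) (hgW : ∀ w ∈ W, g w ∈ W)
    (hf2 : ∀ w ∈ W, f (f w) = -w) (hg2 : ∀ w ∈ W, g (g w) = -w)
    (hac : ∀ w ∈ W, g (f w) = - f (g w)) :
    finrank ℝ W = 0 ∨ finrank ℝ W = 4 := by
  have hle : finrank ℝ W ≤ 4 := by
    have := Submodule.finrank_le W
    simpa [Module.finrank_pi] using this
  have heven : Even (finrank ℝ W) := by
    set F : W →ₗ[ℝ] W := f.restrict hfW with hF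
    have hFF : F ∘ₗ F = -LinearMap.id := by
      ext ⟨w, hw⟩
      simp [hF, LinearMap.restrict_apply, hf2 w hw]
    have hdet : LinearMap.det F * LinearMap.det F = (-1 : ℝ) ^ finrank ℝ W := by
      rw [← LinearMap.det_comp, hFF]
      have : (-LinearMap.id : W →ₗ[ℝ] W) = (-1 : ℝ) • LinearMap.id := by
        ext w; simp
      rw [this, LinearMap.det_smul, LinearMap.det_id, mul_one]
    by_contra hodd
    rw [Nat.not_even_iff_odd] at hodd
    rw [hodd.neg_one_pow] at hdet
    nlinarith [sq_nonneg (LinearMap.det F)]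
  have h2 : finrank ℝ W ≠ 2 := by
    intro hn2
    have hWbot : W ≠ ⊥ := by
      intro h
      rw [h, finrank_bot] at hn2
      omega
    obtain ⟨w, hwW, hw0⟩ := (Submodule.ne_bot_iff W).mp hWbot
    have hli : LinearIndependent ℝ ![w, f w] := by
      rw [LinearIndependent.pair_iff]
      intro s t hst
      have hst' : s • f w + t • f (f w) = 0 := by
        have := congrArg f hst
        simpa [map_add, map_smul] using this
      rw [hf2 w hwW] at hst'
      have h1 : s • w = -(t • f w) := by linear_combination (norm := module) hst
      have h2 : t • w = s • f w := by linear_combination (norm := module) - hst'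
      have hkey : (s * s + t * t) • w = 0 := by
        have h1' := congrArg (fun v => s • v) h1
        simp only [smul_neg, smul_smul] at h1'
        have h2' : (t * t) • w = (t * s) • f w := by
          have := congrArg (fun v => t • v) h2
          simpa [smul_smul] using this
        rw [add_smul, h1', h2']
        module
      have hs : s * s + t * t = 0 := by
        by_contra h
        exact hw0 (by simpa [h] using smul_eq_zero.mp hkey)
      constructor <;> nlinarith
    have hspan : Submodule.span ℝ {w, f w} = W := by
      apply Submodule.eq_of_le_of_finrank_le
      · rw [Submodule.span_le]
        rintro x (rfl | rfl)
        · exact hwW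
        · exact hfW w hwW
      · rw [hn2]
        have hr : Submodule.span ℝ {w, f w} = Submodule.span ℝ (Set.range ![w, f w]) := by
          congr 1
          ext x
          simp [Matrix.range_cons, Matrix.range_empty]
          tauto
        rw [hr, finrank_span_eq_card hli]
        simp
    obtain ⟨α, β, hgw⟩ := Submodule.mem_span_pair.mp (hspan ▸ hgW w hwW)
    have hgfw : g (f w) = β • w - α • f w := by
      rw [hac w hwW, ← hgw]
      simp only [map_add, map_smul, hf2 w hwW]
      module
    have hggw : g (g w) = (α * α + β * β) • w := by
      conv_lhs => rw [← hgw]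
      rw [map_add, map_smul, map_smul, hgfw, ← hgw]
      module
    rw [hg2 w hwW] at hggw
    have hzero : (α * α + β * β + 1) • w = 0 := by
      rw [add_smul, one_smul, ← hggw]
      module
    have hc : α * α + β * β + 1 = 0 := by
      by_contra h
      exact hw0 (by simpa [h] using smul_eq_zero.mp hzero)
    nlinarith
  obtain ⟨k, hk⟩ := heven
  omega

private lemma aux_core (a b c : (Fin 4 → ℝ) →ₗ[ℝ] (Fin 4 → ℝ))
    (haa : ∀ x, a (a x) = c x) (hbb : ∀ x, b (b x) = c x)
    (hab : ∀ x, a (b x) = c (b (a x))) (hcc : ∀ x, c (c x) = x)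
    (hc1 : ∃ y, c y ≠ y) :
    ∀ x : Fin 4 → ℝ, c x = x → x = 0 := by
  have hca : ∀ x, c (a x) = a (c x) := fun x => by rw [← haa, ← haa x, haa]
  have hcb : ∀ x, c (b x) = b (c x) := fun x => by rw [← hbb, ← hbb x, hbb]
  set V : Submodule ℝ (Fin 4 → ℝ) := LinearMap.ker (c - LinearMap.id) with hV
  set W : Submodule ℝ (Fin 4 → ℝ) := LinearMap.ker (c + LinearMap.id) with hW
  have hmemV : ∀ x, x ∈ V ↔ c x = x := fun x => by
    simp [hV, LinearMap.mem_ker, sub_eq_zero]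
  have hmemW : ∀ x, x ∈ W ↔ c x = -x := fun x => by
    simp [hW, LinearMap.mem_ker, add_eq_zero_iff_eq_neg]
  have hinf : V ⊓ W = ⊥ := by
    rw [Submodule.eq_bot_iff]
    intro x hx
    rw [Submodule.mem_inf] at hx
    obtain ⟨hxV, hxW⟩ := hx
    have h1 := (hmemV x).mp hxV
    have h2 := (hmemW x).mp hxW
    have h3 : x = -x := h1.symm.trans h2
    funext i
    have h4 := congrFun h3 i
    simp only [Pi.neg_apply, Pi.zero_apply] at h4 ⊢
    linarith
  have hsup : V ⊔ W = ⊤ := by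
    rw [Submodule.eq_top_iff']
    intro x
    have hx : x = (1/2 : ℝ) • (x + c x) + (1/2 : ℝ) • (x - c x) := by module
    rw [hx]
    apply Submodule.add_mem
    · exact Submodule.mem_sup_left (Submodule.smul_mem _ _
        ((hmemV (x + c x)).mpr (by rw [map_add, hcc]; abel)))
    · exact Submodule.mem_sup_right (Submodule.smul_mem _ _
        ((hmemW (x - c x)).mpr (by rw [map_sub, hcc]; abel)))
  have hrank : finrank ℝ V + finrank ℝ W = 4 := by
    have := Submodule.finrank_sup_add_finrank_inf_eq V W
    rw [hsup, hinf, finrank_bot, finrank_top, Module.finrank_pi] at this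
    simpa using this.symm
  have hfW : ∀ w ∈ W, a w ∈ W := by
    intro w hw
    rw [hmemW] at hw ⊢
    rw [hca, hw, map_neg]
  have hgW : ∀ w ∈ W, b w ∈ W := by
    intro w hw
    rw [hmemW] at hw ⊢
    rw [hcb, hw, map_neg]
  have haW2 : ∀ w ∈ W, a (a w) = -w := by
    intro w hw; rw [haa, (hmemW w).mp hw]
  have hbW2 : ∀ w ∈ W, b (b w) = -w := by
    intro w hw; rw [hbb, (hmemW w).mp hw]
  have hacW : ∀ w ∈ W, b (a w) = - a (b w) := by
    intro w hw
    have h1 : b (a w) ∈ W := hgW _ (hfW _ hw)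
    have h2 : a (b w) = c (b (a w)) := hab w
    rw [(hmemW _).mp h1] at h2
    rw [h2, neg_neg]
  intro x hx
  rcases aux_W_dim W a b hfW hgW haW2 hbW2 hacW with h0 | h4
  · exfalso
    have hV4 : finrank ℝ V = 4 := by omega
    have hVtop : V = ⊤ := by
      apply Submodule.eq_top_of_finrank_eq
      rw [hV4, Module.finrank_pi]
      simp
    obtain ⟨y, hy⟩ := hc1
    exact hy ((hmemV y).mp (hVtop ▸ Submodule.mem_top))
  · have hV0 : finrank ℝ V = 0 := by omega
    have hVbot : V = ⊥ := Submodule.finrank_eq_zero.mp hV0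
    have hxV : x ∈ V := (hmemV x).mpr hx
    rw [hVbot, Submodule.mem_bot] at hxV
    exact hxV


/-- Every faithful linear orthogonal action of the quaternion group `Q₈` on `ℝ⁴` is free
away from the origin: if `ρ : Q₈ → O(4)` is an injective homomorphism, then for every
`g ≠ 1` and every `x ≠ 0` one has `ρ(g) x ≠ x`. In particular, the induced action of `Q₈`
on the unit sphere `S³ ⊂ ℝ⁴` is free. -/
theorem quaternionGroup_orthogonal_action_free
    (ρ : QuaternionGroup 2 →* Matrix.orthogonalGroup (Fin 4) ℝ)
    (hρ : Function.Injective ρ) :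
    (∀ g : QuaternionGroup 2, g ≠ 1 → ∀ x : Fin 4 → ℝ, x ≠ 0 →
      (ρ g : Matrix (Fin 4) (Fin 4) ℝ).mulVec x ≠ x) ∧
    (∀ g : QuaternionGroup 2, g ≠ 1 →
      ∀ x : Metric.sphere (0 : EuclideanSpace ℝ (Fin 4)) 1,
        Matrix.toEuclideanLin (ρ g : Matrix (Fin 4) (Fin 4) ℝ)
          (x : EuclideanSpace ℝ (Fin 4)) ≠ (x : EuclideanSpace ℝ (Fin 4))) := by
  have hfact : ∀ g : QuaternionGroup 2, g ≠ 1 →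
      g = QuaternionGroup.a 2 ∨ g ^ 2 = QuaternionGroup.a 2 := by decide
  have coe_mul : ∀ g h : QuaternionGroup 2,
      (ρ (g * h) : Matrix (Fin 4) (Fin 4) ℝ)
        = (ρ g : Matrix (Fin 4) (Fin 4) ℝ) * (ρ h : Matrix (Fin 4) (Fin 4) ℝ) := by
    intro g h
    rw [map_mul]
    rfl
  have hcomp : ∀ (M N : Matrix (Fin 4) (Fin 4) ℝ) (x : Fin 4 → ℝ),
      Matrix.toLin' M (Matrix.toLin' N x) = Matrix.toLin' (M * N) x := by
    intro M N x; rw [Matrix.toLin'_mul]; rfl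
  have hc1 : ∃ y : Fin 4 → ℝ,
      Matrix.toLin' (ρ (QuaternionGroup.a 2) : Matrix (Fin 4) (Fin 4) ℝ) y ≠ y := by
    by_contra h
    push_neg at h
    have h2 : Matrix.toLin' (ρ (QuaternionGroup.a 2) : Matrix (Fin 4) (Fin 4) ℝ)
        = Matrix.toLin' (1 : Matrix (Fin 4) (Fin 4) ℝ) := by
      apply LinearMap.ext
      intro x
      rw [Matrix.toLin'_one, h x]
      rfl
    have h3 : (ρ (QuaternionGroup.a 2) : Matrix (Fin 4) (Fin 4) ℝ) = 1 :=
      Matrix.toLin'.injective h2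
    have h4 : ρ (QuaternionGroup.a 2) = 1 := Subtype.coe_injective h3
    have h5 : (QuaternionGroup.a 2 : QuaternionGroup 2) = 1 :=
      hρ (h4.trans (map_one ρ).symm)
    exact absurd h5 (by decide)
  have core : ∀ x : Fin 4 → ℝ,
      (ρ (QuaternionGroup.a 2) : Matrix (Fin 4) (Fin 4) ℝ).mulVec x = x → x = 0 := by
    intro x hx
    refine aux_core (Matrix.toLin' (ρ (QuaternionGroup.a 1) : Matrix (Fin 4) (Fin 4) ℝ))
      (Matrix.toLin' (ρ (QuaternionGroup.xa 0) : Matrix (Fin 4) (Fin 4) ℝ))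
      (Matrix.toLin' (ρ (QuaternionGroup.a 2) : Matrix (Fin 4) (Fin 4) ℝ))
      (fun y => ?_) (fun y => ?_) (fun y => ?_) (fun y => ?_) hc1 x
      (by rw [Matrix.toLin'_apply]; exact hx)
    · rw [hcomp, ← coe_mul,
        show (QuaternionGroup.a 1 : QuaternionGroup 2) * QuaternionGroup.a 1
          = QuaternionGroup.a 2 by decide]
    · rw [hcomp, ← coe_mul,
        show (QuaternionGroup.xa 0 : QuaternionGroup 2) * QuaternionGroup.xa 0
          = QuaternionGroup.a 2 by decide]
    · rw [hcomp, hcomp, hcomp, ← coe_mul, ← coe_mul, ← coe_mul,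
        show (QuaternionGroup.a 1 : QuaternionGroup 2) * QuaternionGroup.xa 0
          = QuaternionGroup.a 2 * QuaternionGroup.xa 0 * QuaternionGroup.a 1 by decide]
    · rw [hcomp, ← coe_mul,
        show (QuaternionGroup.a 2 : QuaternionGroup 2) * QuaternionGroup.a 2 = 1 by decide,
        map_one]
      have : ((1 : Matrix.orthogonalGroup (Fin 4) ℝ) : Matrix (Fin 4) (Fin 4) ℝ) = 1 := rfl
      rw [this, Matrix.toLin'_one]
      rfl
  have part1 : ∀ g : QuaternionGroup 2, g ≠ 1 → ∀ x : Fin 4 → ℝ, x ≠ 0 →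
      (ρ g : Matrix (Fin 4) (Fin 4) ℝ).mulVec x ≠ x := by
    intro g hg x hx0 hfix
    rcases hfact g hg with rfl | hg2
    · exact hx0 (core x hfix)
    · apply hx0
      apply core
      rw [← hg2, pow_two, coe_mul, ← Matrix.mulVec_mulVec, hfix, hfix]
  refine ⟨part1, ?_⟩
  intro g hg x heq
  have hxnorm : ‖(x : EuclideanSpace ℝ (Fin 4))‖ = 1 := by
    have := x.2
    rwa [mem_sphere_zero_iff_norm] at this
  have hxne : (x : EuclideanSpace ℝ (Fin 4)) ≠ 0 := by
    intro h
    rw [h, norm_zero] at hxnorm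
    norm_num at hxnorm
  set y : Fin 4 → ℝ := (WithLp.equiv 2 (Fin 4 → ℝ)) (x : EuclideanSpace ℝ (Fin 4)) with hy
  have hyne : y ≠ 0 := by
    intro h
    apply hxne
    have := congrArg (WithLp.equiv 2 (Fin 4 → ℝ)).symm h
    rwa [hy, Equiv.symm_apply_apply] at this
  rw [Matrix.toEuclideanLin_apply] at heq
  have heq2 : (ρ g : Matrix (Fin 4) (Fin 4) ℝ).mulVec y = y := by
    have := congrArg (WithLp.equiv 2 (Fin 4 → ℝ)) heq
    exact this
  exact part1 g hg y hyne heq2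

end
end

section
/- Let S² be the unit sphere in ℝ³. The orbit space of S² × S² by the involution ρ(x, y) = (y, x) exchanging the two factors, equipped with the quotient topology, is homeomorphic to the complex projective plane ℂP². -/
noncomputable section

/-- The setoid on nonzero vectors of `ℂ³` whose quotient is the complex projective plane. -/
def projSetoid3 : Setoid {v : Fin 3 → ℂ // v ≠ 0} where
  r v w := ∃ c : ℂ, c ≠ 0 ∧ (w : Fin 3 → ℂ) = c • (v : Fin 3 → ℂ)
  iseqv := by
    refine ⟨fun v => ⟨1, one_ne_zero, (one_smul _ _).symm⟩, ?_, ?_⟩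
    · rintro v w ⟨c, hc, h⟩
      exact ⟨c⁻¹, inv_ne_zero hc, by rw [h, smul_smul, inv_mul_cancel₀ hc, one_smul]⟩
    · rintro u v w ⟨c, hc, h⟩ ⟨d, hd, h'⟩
      exact ⟨d * c, mul_ne_zero hd hc, by rw [h', h, smul_smul]⟩

/-- The complex projective plane `ℂP²` with its quotient topology. -/
abbrev CP2 : Type := Quotient projSetoid3

/-- The unit 2-sphere in `ℝ³`. -/
abbrev TwoSphere := Metric.sphere (0 : EuclideanSpace ℝ (Fin 3)) 1

namespace S2toCP2
open Complex

def mul2 (u v : ℂ × ℂ) : Fin 3 → ℂ := ![u.1 * v.1, u.1 * v.2 + u.2 * v.1, u.2 * v.2]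

lemma prod_ne_zero_iff {u : ℂ × ℂ} : u ≠ 0 ↔ u.1 ≠ 0 ∨ u.2 ≠ 0 := by
  rw [Ne, Prod.ext_iff]; push_neg; tauto

lemma prod_eq_zero {u : ℂ × ℂ} (h1 : u.1 = 0) (h2 : u.2 = 0) : u = 0 :=
  Prod.ext h1 h2

lemma snd_ne {u : ℂ × ℂ} (hu : u ≠ 0) (h1 : u.1 = 0) : u.2 ≠ 0 :=
  (prod_ne_zero_iff.1 hu).resolve_left (not_not_intro h1)

lemma mul2_comm (u v : ℂ × ℂ) : mul2 u v = mul2 v u := by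
  funext i; fin_cases i <;> simp [mul2] <;> ring

lemma mul2_smul_smul (c d : ℂ) (u v : ℂ × ℂ) :
    mul2 (c • u) (d • v) = (c * d) • mul2 u v := by
  funext i; fin_cases i <;> simp [mul2, Prod.smul_fst, Prod.smul_snd, smul_eq_mul] <;> ring

lemma mul2_ne_zero {u v : ℂ × ℂ} (hu : u ≠ 0) (hv : v ≠ 0) : mul2 u v ≠ 0 := by
  intro h
  have h0 : u.1 * v.1 = 0 := congrFun h 0
  have h1 : u.1 * v.2 + u.2 * v.1 = 0 := congrFun h 1
  have h2 : u.2 * v.2 = 0 := congrFun h 2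
  by_cases hu1 : u.1 = 0
  · have hu2 : u.2 ≠ 0 := snd_ne hu hu1
    have hv1 : v.1 = 0 := by
      have hz : u.2 * v.1 = 0 := by linear_combination h1 - v.2 * hu1
      exact (mul_eq_zero.1 hz).resolve_left hu2
    have hv2 : v.2 = 0 := (mul_eq_zero.1 h2).resolve_left hu2
    exact hv (prod_eq_zero hv1 hv2)
  · have hv1 : v.1 = 0 := (mul_eq_zero.1 h0).resolve_left hu1
    have hv2 : v.2 = 0 := by
      have hz : u.1 * v.2 = 0 := by linear_combination h1 - u.2 * hv1
      exact (mul_eq_zero.1 hz).resolve_left hu1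
    exact hv (prod_eq_zero hv1 hv2)

def det2 (u v : ℂ × ℂ) : ℂ := u.1 * v.2 - u.2 * v.1

lemma para_of_det2 {u v : ℂ × ℂ} (hu : u ≠ 0) (hv : v ≠ 0) (h : det2 u v = 0) :
    ∃ c : ℂ, c ≠ 0 ∧ v = c • u := by
  simp only [det2] at h
  by_cases hu1 : u.1 = 0
  · have hu2 : u.2 ≠ 0 := snd_ne hu hu1
    have hv1 : v.1 = 0 := by
      have hz : u.2 * v.1 = 0 := by linear_combination -h + v.2 * hu1
      exact (mul_eq_zero.1 hz).resolve_left hu2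
    have hv2 : v.2 ≠ 0 := snd_ne hv hv1
    refine ⟨v.2 / u.2, div_ne_zero hv2 hu2, Prod.ext ?_ ?_⟩
    · simp [Prod.smul_fst, smul_eq_mul, hu1, hv1]
    · simp only [Prod.smul_snd, smul_eq_mul]
      rw [div_mul_eq_mul_div, eq_div_iff hu2]
  · have hv1 : v.1 ≠ 0 := by
      intro hv1
      have hv2 : v.2 = 0 := by
        have hz : u.1 * v.2 = 0 := by linear_combination h + u.2 * hv1
        exact (mul_eq_zero.1 hz).resolve_left hu1
      exact hv (prod_eq_zero hv1 hv2)
    refine ⟨v.1 / u.1, div_ne_zero hv1 hu1, Prod.ext ?_ ?_⟩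
    · simp only [Prod.smul_fst, smul_eq_mul]
      rw [div_mul_eq_mul_div, eq_div_iff hu1]
    · simp only [Prod.smul_snd, smul_eq_mul]
      rw [div_mul_eq_mul_div, eq_div_iff hu1]; linear_combination h

lemma mul2_eq_smul_cases {u v u' v' : ℂ × ℂ} {c : ℂ} (hc : c ≠ 0)
    (h : mul2 u v = c • mul2 u' v') :
    (det2 u u' = 0 ∧ det2 v v' = 0) ∨ (det2 u v' = 0 ∧ det2 v u' = 0) := by
  have h0 : u.1 * v.1 = c * (u'.1 * v'.1) := congrFun h 0
  have h1 : u.1 * v.2 + u.2 * v.1 = c * (u'.1 * v'.2 + u'.2 * v'.1) := congrFun h 1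
  have h2 : u.2 * v.2 = c * (u'.2 * v'.2) := congrFun h 2
  have key : ∀ p q : ℂ, (u.1 * p + u.2 * q) * (v.1 * p + v.2 * q)
      = c * ((u'.1 * p + u'.2 * q) * (v'.1 * p + v'.2 * q)) := by
    intro p q
    linear_combination p^2 * h0 + p * q * h1 + q^2 * h2
  have f1 : det2 u u' * det2 v u' = 0 := by
    have hk := key u'.2 (-u'.1); simp only [det2]; linear_combination hk
  have f2 : det2 u v' * det2 v v' = 0 := by
    have hk := key v'.2 (-v'.1); simp only [det2]; linear_combination hk
  have f3 : det2 u u' * det2 u v' = 0 := by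
    have hk := key u.2 (-u.1)
    have hz : c * (det2 u u' * det2 u v') = 0 := by simp only [det2]; linear_combination -hk
    exact (mul_eq_zero.1 hz).resolve_left hc
  have f4 : det2 v u' * det2 v v' = 0 := by
    have hk := key v.2 (-v.1)
    have hz : c * (det2 v u' * det2 v v') = 0 := by simp only [det2]; linear_combination -hk
    exact (mul_eq_zero.1 hz).resolve_left hc
  by_cases hA : det2 u u' = 0
  · by_cases hD : det2 v v' = 0
    · exact Or.inl ⟨hA, hD⟩
    · exact Or.inr ⟨(mul_eq_zero.1 f2).resolve_right hD, (mul_eq_zero.1 f4).resolve_right hD⟩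
  · exact Or.inr ⟨(mul_eq_zero.1 f3).resolve_left hA, (mul_eq_zero.1 f1).resolve_left hA⟩

lemma exists_mul2 (w : Fin 3 → ℂ) (hw : w ≠ 0) :
    ∃ u v : ℂ × ℂ, u ≠ 0 ∧ v ≠ 0 ∧ mul2 u v = w := by
  by_cases h0 : w 0 = 0
  · refine ⟨(0, 1), (w 1, w 2), by simp [prod_ne_zero_iff], ?_, ?_⟩
    · intro h
      apply hw; funext i; fin_cases i
      · exact h0
      · exact congrArg Prod.fst h
      · exact congrArg Prod.snd h
    · funext i; fin_cases i
      · simpa [mul2] using h0.symm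
      · simp [mul2]
      · simp [mul2]
  · obtain ⟨r, hr⟩ := IsAlgClosed.exists_pow_nat_eq (w 1 ^ 2 - 4 * w 0 * w 2) (n := 2) (by norm_num)
    refine ⟨(w 0, (w 1 + r) / 2), (1, (w 1 - r) / (2 * w 0)),
      by simp [prod_ne_zero_iff, h0], by simp [prod_ne_zero_iff], ?_⟩
    funext i; fin_cases i
    · simp [mul2]
    · simp only [mul2]; show w 0 * ((w 1 - r) / (2 * w 0)) + (w 1 + r)/2 * 1 = w 1
      field_simp; ring
    · simp only [mul2]; show (w 1 + r)/2 * ((w 1 - r) / (2 * w 0)) = w 2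
      field_simp; linear_combination -hr

/-! ### The Hopf map -/

def nsq (u : ℂ × ℂ) : ℝ := normSq u.1 + normSq u.2

lemma nsq_pos {u : ℂ × ℂ} (hu : u ≠ 0) : 0 < nsq u := by
  rcases prod_ne_zero_iff.1 hu with h | h
  · have := normSq_pos.2 h
    have := normSq_nonneg u.2
    unfold nsq; linarith
  · have := normSq_pos.2 h
    have := normSq_nonneg u.1
    unfold nsq; linarith

def hopfRaw (u : ℂ × ℂ) : EuclideanSpace ℝ (Fin 3) :=
  WithLp.toLp 2 ![2 * (u.1 * (starRingEnd ℂ) u.2).re / nsq u,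
    2 * (u.1 * (starRingEnd ℂ) u.2).im / nsq u,
    (normSq u.1 - normSq u.2) / nsq u]

lemma hopfRaw_apply0 (u : ℂ × ℂ) : hopfRaw u 0 = 2 * (u.1 * (starRingEnd ℂ) u.2).re / nsq u := rfl
lemma hopfRaw_apply1 (u : ℂ × ℂ) : hopfRaw u 1 = 2 * (u.1 * (starRingEnd ℂ) u.2).im / nsq u := rfl
lemma hopfRaw_apply2 (u : ℂ × ℂ) : hopfRaw u 2 = (normSq u.1 - normSq u.2) / nsq u := rfl

lemma sq_add_sq_re_im (z : ℂ) : z.re ^ 2 + z.im ^ 2 = normSq z := by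
  simp [normSq_apply]; ring

lemma hopfRaw_mem {u : ℂ × ℂ} (hu : u ≠ 0) :
    hopfRaw u ∈ Metric.sphere (0 : EuclideanSpace ℝ (Fin 3)) 1 := by
  have hn := nsq_pos hu
  rw [mem_sphere_zero_iff_norm, EuclideanSpace.norm_eq, Real.sqrt_eq_one,
    Fin.sum_univ_three]
  rw [hopfRaw_apply0, hopfRaw_apply1, hopfRaw_apply2]
  have hP : (u.1 * (starRingEnd ℂ) u.2).re ^ 2 + (u.1 * (starRingEnd ℂ) u.2).im ^ 2
      = normSq u.1 * normSq u.2 := by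
    rw [sq_add_sq_re_im, normSq_mul, normSq_conj]
  simp only [Real.norm_eq_abs, sq_abs]
  have hne : nsq u ≠ 0 := ne_of_gt hn
  field_simp
  simp only [nsq, normSq_apply, mul_re, mul_im, conj_re, conj_im]
  ring

def Hopf (u : {u : ℂ × ℂ // u ≠ 0}) : TwoSphere := ⟨hopfRaw u.1, hopfRaw_mem u.2⟩

lemma hopfRaw_smul {c : ℂ} (hc : c ≠ 0) (u : ℂ × ℂ) : hopfRaw (c • u) = hopfRaw u := by
  have hns : normSq c ≠ 0 := by simpa using hc
  have hfst : (c • u).1 = c * u.1 := rfl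
  have hsnd : (c • u).2 = c * u.2 := rfl
  have hP : ((c • u).1 * (starRingEnd ℂ) (c • u).2) = (normSq c : ℂ) * (u.1 * (starRingEnd ℂ) u.2) := by
    rw [hfst, hsnd, map_mul, ← mul_conj]; ring
  have hnsq : nsq (c • u) = normSq c * nsq u := by
    simp only [nsq, hfst, hsnd, normSq_mul]; ring
  refine PiLp.ext fun i => ?_
  fin_cases i
  · show hopfRaw _ 0 = hopfRaw _ 0
    rw [hopfRaw_apply0, hopfRaw_apply0, hP, hnsq]
    rw [show ((normSq c : ℂ) * (u.1 * (starRingEnd ℂ) u.2)).re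
        = normSq c * (u.1 * (starRingEnd ℂ) u.2).re by simp [Complex.ext_iff]]
    rw [show 2 * (normSq c * (u.1 * (starRingEnd ℂ) u.2).re) = normSq c * (2 * (u.1 * (starRingEnd ℂ) u.2).re) by ring]
    exact mul_div_mul_left _ _ hns
  · show hopfRaw _ 1 = hopfRaw _ 1
    rw [hopfRaw_apply1, hopfRaw_apply1, hP, hnsq]
    rw [show ((normSq c : ℂ) * (u.1 * (starRingEnd ℂ) u.2)).im
        = normSq c * (u.1 * (starRingEnd ℂ) u.2).im by simp [Complex.ext_iff]]
    rw [show 2 * (normSq c * (u.1 * (starRingEnd ℂ) u.2).im) = normSq c * (2 * (u.1 * (starRingEnd ℂ) u.2).im) by ring]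
    exact mul_div_mul_left _ _ hns
  · show hopfRaw _ 2 = hopfRaw _ 2
    rw [hopfRaw_apply2, hopfRaw_apply2, hfst, hsnd, normSq_mul, normSq_mul, hnsq]
    rw [show normSq c * normSq u.1 - normSq c * normSq u.2 = normSq c * (normSq u.1 - normSq u.2) by ring]
    exact mul_div_mul_left _ _ hns

lemma hopf_smul {u u' : {u : ℂ × ℂ // u ≠ 0}} {c : ℂ} (hc : c ≠ 0)
    (h : (u' : ℂ × ℂ) = c • (u : ℂ × ℂ)) : Hopf u' = Hopf u := by
  apply Subtype.ext
  show hopfRaw u'.1 = hopfRaw u.1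
  rw [h, hopfRaw_smul hc]

/-! ### Charts -/

lemma sphere_coord (p : TwoSphere) :
    (p : EuclideanSpace ℝ (Fin 3)) 0 ^ 2 + (p : EuclideanSpace ℝ (Fin 3)) 1 ^ 2
      + (p : EuclideanSpace ℝ (Fin 3)) 2 ^ 2 = 1 := by
  have h := p.2
  rw [mem_sphere_zero_iff_norm, EuclideanSpace.norm_eq, Real.sqrt_eq_one,
    Fin.sum_univ_three] at h
  simpa [Real.norm_eq_abs, sq_abs] using h



def sA (p : TwoSphere) : ℂ × ℂ :=
  (((p : EuclideanSpace ℝ (Fin 3)) 0 : ℂ) + ((p : EuclideanSpace ℝ (Fin 3)) 1 : ℂ) * I,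
    1 - ((p : EuclideanSpace ℝ (Fin 3)) 2 : ℂ))

def sB (p : TwoSphere) : ℂ × ℂ :=
  (1 + ((p : EuclideanSpace ℝ (Fin 3)) 2 : ℂ),
    ((p : EuclideanSpace ℝ (Fin 3)) 0 : ℂ) - ((p : EuclideanSpace ℝ (Fin 3)) 1 : ℂ) * I)

lemma sA_ne {p : TwoSphere} (h : (p : EuclideanSpace ℝ (Fin 3)) 2 ≠ 1) : sA p ≠ 0 := by
  intro hz
  have h2 : (sA p).2 = 0 := by rw [hz]; rfl
  simp only [sA, sub_eq_zero] at h2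
  exact h (Complex.ofReal_injective (h2.symm.trans Complex.ofReal_one.symm))

lemma sB_ne {p : TwoSphere} (h : (p : EuclideanSpace ℝ (Fin 3)) 2 ≠ -1) : sB p ≠ 0 := by
  intro hz
  have h2 : (sB p).1 = 0 := by rw [hz]; rfl
  simp only [sB] at h2
  apply h
  have : ((p : EuclideanSpace ℝ (Fin 3)) 2 : ℂ) = -1 := by linear_combination h2
  exact Complex.ofReal_injective (by rw [this, Complex.ofReal_neg, Complex.ofReal_one])

lemma hopfRaw_sA {p : TwoSphere} (h : (p : EuclideanSpace ℝ (Fin 3)) 2 ≠ 1) :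
    hopfRaw (sA p) = (p : EuclideanSpace ℝ (Fin 3)) := by
  set x := (p : EuclideanSpace ℝ (Fin 3)) 0 with hx
  set y := (p : EuclideanSpace ℝ (Fin 3)) 1 with hy
  set z := (p : EuclideanSpace ℝ (Fin 3)) 2 with hzz
  have hs : x ^ 2 + y ^ 2 + z ^ 2 = 1 := sphere_coord p
  have hz1 : (1 : ℝ) - z ≠ 0 := fun hc => h (by linarith [sub_eq_zero.1 hc])
  have hnsq : nsq (sA p) = 2 * (1 - z) := by
    simp only [nsq, sA, normSq_apply]
    simp [← hx, ← hy, ← hzz]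
    nlinarith [hs]
  have hP : (sA p).1 * (starRingEnd ℂ) (sA p).2 = ((x * (1 - z) : ℝ) : ℂ) + ((y * (1 - z) : ℝ) : ℂ) * I := by
    simp only [sA]
    rw [map_sub, map_one, conj_ofReal]
    push_cast
    ring
  refine PiLp.ext fun i => ?_
  fin_cases i
  · show hopfRaw _ 0 = x
    rw [hopfRaw_apply0, hP, hnsq]
    simp only [add_re, ofReal_re, mul_re, I_re, I_im, ofReal_im]
    field_simp
    ring
  · show hopfRaw _ 1 = y
    rw [hopfRaw_apply1, hP, hnsq]
    simp only [add_im, ofReal_im, mul_im, I_re, I_im, ofReal_re]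
    field_simp
    ring
  · show hopfRaw _ 2 = z
    rw [hopfRaw_apply2, hnsq]
    have hn1 : normSq (sA p).1 = x ^ 2 + y ^ 2 := by
      simp only [sA, normSq_apply]; simp [← hx, ← hy]; ring
    have hn2 : normSq (sA p).2 = (1 - z) ^ 2 := by
      simp only [sA, normSq_apply]; simp [← hzz]; ring
    rw [hn1, hn2]
    rw [div_eq_iff (by positivity)]
    nlinarith [hs]

lemma hopfRaw_sB {p : TwoSphere} (h : (p : EuclideanSpace ℝ (Fin 3)) 2 ≠ -1) :
    hopfRaw (sB p) = (p : EuclideanSpace ℝ (Fin 3)) := by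
  set x := (p : EuclideanSpace ℝ (Fin 3)) 0 with hx
  set y := (p : EuclideanSpace ℝ (Fin 3)) 1 with hy
  set z := (p : EuclideanSpace ℝ (Fin 3)) 2 with hzz
  have hs : x ^ 2 + y ^ 2 + z ^ 2 = 1 := sphere_coord p
  have hz1 : (1 : ℝ) + z ≠ 0 := fun hc => h (by linarith)
  have hnsq : nsq (sB p) = 2 * (1 + z) := by
    simp only [nsq, sB, normSq_apply]
    simp [← hx, ← hy, ← hzz]
    nlinarith [hs]
  have hP : (sB p).1 * (starRingEnd ℂ) (sB p).2 = ((x * (1 + z) : ℝ) : ℂ) + ((y * (1 + z) : ℝ) : ℂ) * I := by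
    simp only [sB]
    rw [map_sub, map_mul, conj_ofReal, conj_ofReal, conj_I]
    push_cast
    ring
  refine PiLp.ext fun i => ?_
  fin_cases i
  · show hopfRaw _ 0 = x
    rw [hopfRaw_apply0, hP, hnsq]
    simp only [add_re, ofReal_re, mul_re, I_re, I_im, ofReal_im]
    field_simp
    ring
  · show hopfRaw _ 1 = y
    rw [hopfRaw_apply1, hP, hnsq]
    simp only [add_im, ofReal_im, mul_im, I_re, I_im, ofReal_re]
    field_simp
    ring
  · show hopfRaw _ 2 = z
    rw [hopfRaw_apply2, hnsq]
    have hn1 : normSq (sB p).1 = (1 + z) ^ 2 := by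
      simp only [sB, normSq_apply]; simp [← hzz]; ring
    have hn2 : normSq (sB p).2 = x ^ 2 + y ^ 2 := by
      simp only [sB, normSq_apply]; simp [← hx, ← hy]; ring
    rw [hn1, hn2]
    rw [div_eq_iff (by positivity)]
    nlinarith [hs]

lemma hopf_surjective : Function.Surjective Hopf := by
  intro p
  by_cases h : (p : EuclideanSpace ℝ (Fin 3)) 2 = 1
  · have h' : (p : EuclideanSpace ℝ (Fin 3)) 2 ≠ -1 := by rw [h]; norm_num
    exact ⟨⟨sB p, sB_ne h'⟩, Subtype.ext (hopfRaw_sB h')⟩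
  · exact ⟨⟨sA p, sA_ne h⟩, Subtype.ext (hopfRaw_sA h)⟩

def sec : TwoSphere → {u : ℂ × ℂ // u ≠ 0} := Function.surjInv hopf_surjective

lemma hopf_sec (p : TwoSphere) : Hopf (sec p) = p := Function.surjInv_eq hopf_surjective p

/-- the fiber lemma: Hopf determines spinors up to scale -/
lemma hopf_fiber {u u' : {u : ℂ × ℂ // u ≠ 0}} (h : Hopf u = Hopf u') :
    ∃ c : ℂ, c ≠ 0 ∧ (u' : ℂ × ℂ) = c • (u : ℂ × ℂ) := by
  have hco : hopfRaw u.1 = hopfRaw u'.1 := congrArg Subtype.val h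
  have h0 : hopfRaw u.1 0 = hopfRaw u'.1 0 := by rw [hco]
  have h1 : hopfRaw u.1 1 = hopfRaw u'.1 1 := by rw [hco]
  have h2 : hopfRaw u.1 2 = hopfRaw u'.1 2 := by rw [hco]
  rw [hopfRaw_apply0, hopfRaw_apply0] at h0
  rw [hopfRaw_apply1, hopfRaw_apply1] at h1
  rw [hopfRaw_apply2, hopfRaw_apply2] at h2
  have hn := nsq_pos u.2
  have hn' := nsq_pos u'.2
  set k : ℝ := nsq u'.1 / nsq u.1 with hk
  have hkpos : 0 < k := div_pos hn' hn
  rw [div_eq_div_iff hn.ne' hn'.ne'] at h0 h1 h2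
  have hX : (u'.1.1 * (starRingEnd ℂ) u'.1.2).re = k * (u.1.1 * (starRingEnd ℂ) u.1.2).re := by
    rw [hk, div_mul_eq_mul_div, eq_div_iff hn.ne']; linarith
  have hY : (u'.1.1 * (starRingEnd ℂ) u'.1.2).im = k * (u.1.1 * (starRingEnd ℂ) u.1.2).im := by
    rw [hk, div_mul_eq_mul_div, eq_div_iff hn.ne']; linarith
  have hAB : normSq u'.1.1 - normSq u'.1.2 = k * (normSq u.1.1 - normSq u.1.2) := by
    rw [hk, div_mul_eq_mul_div, eq_div_iff hn.ne']; linarith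
  have hsum : normSq u'.1.1 + normSq u'.1.2 = k * (normSq u.1.1 + normSq u.1.2) := by
    rw [hk]
    show nsq u'.1 = nsq u'.1 / nsq u.1 * nsq u.1
    rw [div_mul_cancel₀ _ hn.ne']
  have hA : normSq u'.1.1 = k * normSq u.1.1 := by linarith
  have hP : u'.1.1 * (starRingEnd ℂ) u'.1.2 = (k : ℂ) * (u.1.1 * (starRingEnd ℂ) u.1.2) := by
    apply Complex.ext
    · simpa using hX
    · simpa using hY
  have hconj : (starRingEnd ℂ) u'.1.1 * u'.1.2 = (k : ℂ) * ((starRingEnd ℂ) u.1.1 * u.1.2) := by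
    have := congrArg (starRingEnd ℂ) hP
    simpa [map_mul, conj_ofReal] using this
  have hdet : det2 u.1 u'.1 = 0 := by
    by_cases hu'1 : u'.1.1 = 0
    · have hA0 : normSq u'.1.1 = 0 := by rw [hu'1]; simp
      have : normSq u.1.1 = 0 := by
        have := hA0.symm.trans hA
        nlinarith
      have hu1 : u.1.1 = 0 := normSq_eq_zero.1 this
      simp [det2, hu1, hu'1]
    · have hcne : (starRingEnd ℂ) u'.1.1 ≠ 0 := by simpa using hu'1
      have m1 : u.1.1 * (starRingEnd ℂ) u.1.1 = (normSq u.1.1 : ℂ) := mul_conj u.1.1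
      have m2 : u'.1.1 * (starRingEnd ℂ) u'.1.1 = (normSq u'.1.1 : ℂ) := mul_conj u'.1.1
      have hAc : (normSq u'.1.1 : ℂ) = (k : ℂ) * (normSq u.1.1 : ℂ) := by
        rw [← ofReal_mul]; exact_mod_cast congrArg (fun t : ℝ => (t : ℂ)) hA
      have hz : (starRingEnd ℂ) u'.1.1 * det2 u.1 u'.1 = 0 := by
        simp only [det2]
        linear_combination u.1.1 * hconj - u.1.2 * m2 + (k : ℂ) * u.1.2 * m1 - u.1.2 * hAc
      exact (mul_eq_zero.1 hz).resolve_left hcne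
  exact para_of_det2 u.2 u'.2 hdet

/-! ### The map to CP2 -/

def Fpre (p q : TwoSphere) : CP2 :=
  Quotient.mk projSetoid3 ⟨mul2 (sec p).1 (sec q).1, mul2_ne_zero (sec p).2 (sec q).2⟩

lemma Fpre_eq {u v : ℂ × ℂ} (hu : u ≠ 0) (hv : v ≠ 0) {p q : TwoSphere}
    (hp : Hopf ⟨u, hu⟩ = p) (hq : Hopf ⟨v, hv⟩ = q) :
    Fpre p q = Quotient.mk projSetoid3 ⟨mul2 u v, mul2_ne_zero hu hv⟩ := by
  obtain ⟨c, hc, hcu⟩ := hopf_fiber ((hopf_sec p).trans hp.symm)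
  obtain ⟨d, hd, hdv⟩ := hopf_fiber ((hopf_sec q).trans hq.symm)
  apply Quotient.sound
  refine ⟨c * d, mul_ne_zero hc hd, ?_⟩
  show mul2 u v = (c * d) • mul2 (sec p).1 (sec q).1
  rw [show u = c • ((sec p) : ℂ × ℂ) from hcu, show v = d • ((sec q) : ℂ × ℂ) from hdv,
    mul2_smul_smul]

lemma Fpre_comm (p q : TwoSphere) : Fpre p q = Fpre q p := by
  apply Quotient.sound
  exact ⟨1, one_ne_zero, by rw [one_smul]; exact mul2_comm _ _⟩

lemma Fpre_inj {p q p' q' : TwoSphere} (h : Fpre p q = Fpre p' q') :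
    (p' = p ∧ q' = q) ∨ (p' = q ∧ q' = p) := by
  obtain ⟨c, hc, hcs⟩ := Quotient.exact h
  have hcs' : mul2 (sec p').1 (sec q').1 = c • mul2 (sec p).1 (sec q).1 := hcs
  rcases mul2_eq_smul_cases hc hcs' with ⟨h1, h2⟩ | ⟨h1, h2⟩
  · obtain ⟨e, he, heq⟩ := para_of_det2 (sec p').2 (sec p).2 h1
    obtain ⟨f, hf, hfq⟩ := para_of_det2 (sec q').2 (sec q).2 h2
    left
    constructor
    · rw [← hopf_sec p, ← hopf_sec p']; exact (hopf_smul he heq).symm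
    · rw [← hopf_sec q, ← hopf_sec q']; exact (hopf_smul hf hfq).symm
  · obtain ⟨e, he, heq⟩ := para_of_det2 (sec p').2 (sec q).2 h1
    obtain ⟨f, hf, hfq⟩ := para_of_det2 (sec q').2 (sec p).2 h2
    right
    constructor
    · rw [← hopf_sec q, ← hopf_sec p']; exact (hopf_smul he heq).symm
    · rw [← hopf_sec p, ← hopf_sec q']; exact (hopf_smul hf hfq).symm

def F : (Quot fun p q : TwoSphere × TwoSphere => q = (p.2, p.1)) → CP2 :=
  Quot.lift (fun x => Fpre x.1 x.2) (by
    rintro ⟨p, q⟩ x h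
    rw [h]
    exact Fpre_comm p q)

lemma F_injective : Function.Injective F := by
  intro a b
  refine Quot.induction_on₂ a b ?_
  rintro ⟨p, q⟩ ⟨p', q'⟩ h
  have h' : Fpre p q = Fpre p' q' := h
  rcases Fpre_inj h' with ⟨h1, h2⟩ | ⟨h1, h2⟩
  · rw [h1, h2]
  · rw [h1, h2]
    exact Quot.sound rfl

lemma F_surjective : Function.Surjective F := by
  intro y
  refine Quotient.inductionOn y ?_
  rintro ⟨w, hw⟩
  obtain ⟨u, v, hu, hv, hmul⟩ := exists_mul2 w hw
  refine ⟨Quot.mk _ (Hopf ⟨u, hu⟩, Hopf ⟨v, hv⟩), ?_⟩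
  show Fpre (Hopf ⟨u, hu⟩) (Hopf ⟨v, hv⟩) = _
  rw [Fpre_eq hu hv rfl rfl]
  congr 1
  exact Subtype.ext hmul

/-! ### CP2 is Hausdorff -/

def tden (v : Fin 3 → ℂ) : ℝ := normSq (v 0) + normSq (v 1) + normSq (v 2)

lemma tden_pos {v : Fin 3 → ℂ} (hv : v ≠ 0) : 0 < tden v := by
  have h : ∃ i, v i ≠ 0 := by
    by_contra hc
    push_neg at hc
    exact hv (funext hc)
  obtain ⟨i, hi⟩ := h
  have h0 := normSq_nonneg (v 0)
  have h1 := normSq_nonneg (v 1)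
  have h2 := normSq_nonneg (v 2)
  fin_cases i
  · have hp : 0 < normSq (v 0) := normSq_pos.2 hi
    unfold tden; linarith
  · have hp : 0 < normSq (v 1) := normSq_pos.2 hi
    unfold tden; linarith
  · have hp : 0 < normSq (v 2) := normSq_pos.2 hi
    unfold tden; linarith

def TmapRaw (v : {v : Fin 3 → ℂ // v ≠ 0}) : Fin 3 → Fin 3 → ℂ :=
  fun i j => v.1 i * (starRingEnd ℂ) (v.1 j) / ((tden v.1 : ℝ) : ℂ)

lemma TmapRaw_compat (v w : {v : Fin 3 → ℂ // v ≠ 0}) (h : projSetoid3.r v w) :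
    TmapRaw v = TmapRaw w := by
  obtain ⟨c, hc, hcw⟩ := h
  have hns : (normSq c : ℂ) ≠ 0 := by
    simpa using hc
  have htd : tden (c • v.1) = normSq c * tden v.1 := by
    simp only [tden, Pi.smul_apply, smul_eq_mul, normSq_mul]; ring
  funext i j
  simp only [TmapRaw, hcw, Pi.smul_apply, smul_eq_mul, map_mul, htd]
  push_cast
  rw [show c * v.1 i * ((starRingEnd ℂ) c * (starRingEnd ℂ) (v.1 j))
      = (c * (starRingEnd ℂ) c) * (v.1 i * (starRingEnd ℂ) (v.1 j)) by ring, mul_conj]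
  rw [mul_div_mul_left _ _ hns]

def Tmap : CP2 → (Fin 3 → Fin 3 → ℂ) :=
  Quotient.lift TmapRaw TmapRaw_compat

lemma Tmap_injective : Function.Injective Tmap := by
  intro a b
  refine Quotient.inductionOn₂ a b ?_
  rintro v w h
  have h' : TmapRaw v = TmapRaw w := h
  apply Quotient.sound
  have hv := tden_pos v.2
  have hw := tden_pos w.2
  -- v.1 i = (∑ j, TmapRaw v i j * v.1 j)
  have key : ∀ i, v.1 i = (∑ j, (starRingEnd ℂ) (w.1 j) * v.1 j) / ((tden w.1 : ℝ) : ℂ) * w.1 i := by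
    intro i
    have lhs : v.1 i = (∑ j, TmapRaw v i j * v.1 j) := by
      simp only [TmapRaw]
      rw [Fin.sum_univ_three]
      have : ((tden v.1 : ℝ) : ℂ) ≠ 0 := by
        exact_mod_cast hv.ne'
      field_simp
      rw [show ((tden v.1 : ℝ) : ℂ) = ((normSq (v.1 0) : ℝ) : ℂ) + ((normSq (v.1 1) : ℝ) : ℂ)
          + ((normSq (v.1 2) : ℝ) : ℂ) by push_cast [tden]; ring]
      rw [← mul_conj, ← mul_conj, ← mul_conj]
      ring
    rw [lhs]
    rw [h']
    simp only [TmapRaw]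
    rw [Finset.sum_div, Finset.sum_mul]
    congr 1
    funext j
    ring
  set c : ℂ := (∑ j, (starRingEnd ℂ) (w.1 j) * v.1 j) / ((tden w.1 : ℝ) : ℂ) with hcdef
  have hvc : v.1 = c • w.1 := by
    funext i
    rw [Pi.smul_apply, smul_eq_mul, ← key i]
  have hcne : c ≠ 0 := by
    intro hc0
    apply v.2
    rw [hvc, hc0, zero_smul]
  refine ⟨c⁻¹, inv_ne_zero hcne, ?_⟩
  show w.1 = c⁻¹ • v.1
  rw [hvc, smul_smul, inv_mul_cancel₀ hcne, one_smul]

lemma Tmap_continuous : Continuous Tmap := by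
  apply Continuous.quotient_lift (hs := TmapRaw_compat)
  apply continuous_pi
  intro i
  apply continuous_pi
  intro j
  apply Continuous.div
  · exact ((continuous_apply i).comp continuous_subtype_val).mul
      (Complex.continuous_conj.comp ((continuous_apply j).comp continuous_subtype_val))
  · apply Complex.continuous_ofReal.comp
    unfold tden
    exact ((RCLike.continuous_normSq.comp ((continuous_apply (0 : Fin 3)).comp continuous_subtype_val)).add
      (RCLike.continuous_normSq.comp ((continuous_apply (1 : Fin 3)).comp continuous_subtype_val))).add
      (RCLike.continuous_normSq.comp ((continuous_apply (2 : Fin 3)).comp continuous_subtype_val))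
  · intro v
    have := tden_pos v.2
    exact_mod_cast this.ne'

instance : T2Space CP2 := T2Space.of_injective_continuous Tmap_injective Tmap_continuous

/-! ### Continuity -/

lemma coord_continuous (i : Fin 3) :
    Continuous fun p : TwoSphere => (p : EuclideanSpace ℝ (Fin 3)) i :=
  (EuclideanSpace.proj (𝕜 := ℝ) i).continuous.comp continuous_subtype_val

lemma sA_continuous : Continuous sA := by
  apply Continuous.prodMk
  · exact ((Complex.continuous_ofReal.comp (coord_continuous 0)).add
      ((Complex.continuous_ofReal.comp (coord_continuous 1)).mul continuous_const))
  · exact continuous_const.sub (Complex.continuous_ofReal.comp (coord_continuous 2))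

lemma sB_continuous : Continuous sB := by
  apply Continuous.prodMk
  · exact continuous_const.add (Complex.continuous_ofReal.comp (coord_continuous 2))
  · exact ((Complex.continuous_ofReal.comp (coord_continuous 0)).sub
      ((Complex.continuous_ofReal.comp (coord_continuous 1)).mul continuous_const))

lemma mul2_continuous : Continuous fun x : (ℂ × ℂ) × (ℂ × ℂ) => mul2 x.1 x.2 := by
  apply continuous_pi
  intro i
  fin_cases i
  · show Continuous fun x : (ℂ × ℂ) × (ℂ × ℂ) => x.1.1 * x.2.1
    fun_prop
  · show Continuous fun x : (ℂ × ℂ) × (ℂ × ℂ) => x.1.1 * x.2.2 + x.1.2 * x.2.1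
    fun_prop
  · show Continuous fun x : (ℂ × ℂ) × (ℂ × ℂ) => x.1.2 * x.2.2
    fun_prop

lemma chart_exists (p₀ : TwoSphere) : ∃ (U : Set TwoSphere) (s : TwoSphere → ℂ × ℂ),
    IsOpen U ∧ p₀ ∈ U ∧ Continuous s ∧
      ∀ p ∈ U, s p ≠ 0 ∧ hopfRaw (s p) = (p : EuclideanSpace ℝ (Fin 3)) := by
  by_cases h : (p₀ : EuclideanSpace ℝ (Fin 3)) 2 = 1
  · refine ⟨{p : TwoSphere | (p : EuclideanSpace ℝ (Fin 3)) 2 ≠ -1}, sB, ?_, ?_, sB_continuous, ?_⟩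
    · exact isOpen_compl_singleton.preimage (coord_continuous 2)
    · show (p₀ : EuclideanSpace ℝ (Fin 3)) 2 ≠ -1
      rw [h]; norm_num
    · intro p hp
      exact ⟨sB_ne hp, hopfRaw_sB hp⟩
  · refine ⟨{p : TwoSphere | (p : EuclideanSpace ℝ (Fin 3)) 2 ≠ 1}, sA, ?_, h, sA_continuous, ?_⟩
    · exact isOpen_compl_singleton.preimage (coord_continuous 2)
    · intro p hp
      exact ⟨sA_ne hp, hopfRaw_sA hp⟩

lemma Fpre_continuous : Continuous fun x : TwoSphere × TwoSphere => Fpre x.1 x.2 := by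
  rw [continuous_iff_continuousAt]
  rintro ⟨p₀, q₀⟩
  obtain ⟨U, s, hUo, hU0, hsc, hUs⟩ := chart_exists p₀
  obtain ⟨V, t, hVo, hV0, htc, hVt⟩ := chart_exists q₀
  have hWo : IsOpen (U ×ˢ V) := hUo.prod hVo
  have hW0 : (p₀, q₀) ∈ U ×ˢ V := ⟨hU0, hV0⟩
  refine ContinuousOn.continuousAt ?_ (hWo.mem_nhds hW0)
  rw [continuousOn_iff_continuous_restrict]
  have heq : (U ×ˢ V).domRestrict (fun x : TwoSphere × TwoSphere => Fpre x.1 x.2)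
      = fun x : ↥(U ×ˢ V) => Quotient.mk projSetoid3
          ⟨mul2 (s x.1.1) (t x.1.2),
            mul2_ne_zero (hUs _ x.2.1).1 (hVt _ x.2.2).1⟩ := by
    funext x
    exact Fpre_eq (hUs _ x.2.1).1 (hVt _ x.2.2).1 (Subtype.ext (hUs _ x.2.1).2) (Subtype.ext (hVt _ x.2.2).2)
  rw [heq]
  apply Continuous.comp continuous_quotient_mk'
  apply Continuous.subtype_mk
  exact mul2_continuous.comp
    ((hsc.comp (continuous_fst.comp continuous_subtype_val)).prodMk
      (htc.comp (continuous_snd.comp continuous_subtype_val)))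

lemma F_continuous : Continuous F :=
  continuous_quot_lift _ Fpre_continuous

theorem main :
    Nonempty ((Quot fun p q : TwoSphere × TwoSphere => q = (p.2, p.1)) ≃ₜ CP2) := by
  exact ⟨Continuous.homeoOfEquivCompactToT2
    (f := Equiv.ofBijective F ⟨F_injective, F_surjective⟩) F_continuous⟩

end S2toCP2

/-- The orbit space of `S² × S²` by the involution `ρ(x, y) = (y, x)` exchanging the two
factors, equipped with the quotient topology, is homeomorphic to the complex projective
plane `ℂP²`. -/
theorem s2_x_s2_quotient_swap_homeomorph_cp2 :
    Nonempty ((Quot fun p q : TwoSphere × TwoSphere => q = (p.2, p.1)) ≃ₜ CP2) := by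
  exact S2toCP2.main

end
end
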